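/- Let m ≥ 1 be an integer, let B_m and A_m be the (m+1)×(m+1) real matrices defined below, and set C_m = A_m − (m−4)·I. Then det B_m = (1/4)·det C_m. -/

import Mathlib

/-- The tridiagonal matrix `A_m` of the paper: `(A_m)_{i,i} = 3 i`,
`(A_m)_{i,i+1} = 2 (i+1)`, `(A_m)_{i+1,i} = m - i`, all other entries `0`. -/
noncomputable def paperA (m : ℕ) : Matrix (Fin (m + 1)) (Fin (m + 1)) ℝ :=
  Matrix.of fun i j =>
    if (i : ℕ) = (j : ℕ) then 3 * ((i : ℕ) : ℝ)
    else if (j : ℕ) = (i : ℕ) + 1 then 2 * (((i : ℕ) : ℝ) + 1)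
    else if (i : ℕ) = (j : ℕ) + 1 then (m : ℝ) - ((j : ℕ) : ℝ)
    else 0

/-- The matrix `C_m = A_m - (m-4)·I` of the paper. -/
noncomputable def paperC (m : ℕ) : Matrix (Fin (m + 1)) (Fin (m + 1)) ℝ :=
  paperA m - ((m : ℝ) - 4) • (1 : Matrix (Fin (m + 1)) (Fin (m + 1)) ℝ)

/-- The matrix `B_m` of the paper: first row `(B_m)_{0,j} = j + 1`, and for
`1 ≤ i ≤ m`: `(B_m)_{i,i} = 3i + 4 - m`, `(B_m)_{i,i-1} = m + 1 - i`,
`(B_m)_{i,i+1} = 2(i+1)`, all other entries `0`. -/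
noncomputable def paperB (m : ℕ) : Matrix (Fin (m + 1)) (Fin (m + 1)) ℝ :=
  Matrix.of fun i j =>
    if (i : ℕ) = 0 then ((j : ℕ) : ℝ) + 1
    else if (i : ℕ) = (j : ℕ) then 3 * ((i : ℕ) : ℝ) + 4 - (m : ℝ)
    else if (i : ℕ) = (j : ℕ) + 1 then (m : ℝ) + 1 - ((i : ℕ) : ℝ)
    else if (j : ℕ) = (i : ℕ) + 1 then 2 * (((i : ℕ) : ℝ) + 1)
    else 0

/-- `det B_m = (1/4) · det C_m`. -/
noncomputable def paperE (m : ℕ) : Matrix (Fin (m + 1)) (Fin (m + 1)) ℝ :=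
  Matrix.of fun i j => if (i : ℕ) = 0 then (1/4 : ℝ) else if i = j then 1 else 0

lemma paperC_apply (m : ℕ) (i j : Fin (m+1)) :
    paperC m i j =
      if (i : ℕ) = (j : ℕ) then 3 * ((i : ℕ) : ℝ) - ((m : ℝ) - 4)
      else if (j : ℕ) = (i : ℕ) + 1 then 2 * (((i : ℕ) : ℝ) + 1)
      else if (i : ℕ) = (j : ℕ) + 1 then (m : ℝ) - ((j : ℕ) : ℝ)
      else 0 := by
  by_cases h : i = j
  · subst h; simp [paperC, paperA, Matrix.one_apply]
  · have h' : ¬ (i : ℕ) = (j : ℕ) := fun hh => h (Fin.ext hh)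
    simp [paperC, paperA, Matrix.one_apply, h, h']

lemma colsum (m : ℕ) (j : Fin (m+1)) :
    ∑ k : Fin (m+1), paperC m k j = 4 * ((j : ℕ) : ℝ) + 4 := by
  have hrw : ∀ k : Fin (m+1), paperC m k j =
      (if (k : ℕ) = (j : ℕ) then 3 * ((j : ℕ) : ℝ) - ((m : ℝ) - 4) else 0)
      + (if (j : ℕ) = (k : ℕ) + 1 then 2 * ((j : ℕ) : ℝ) else 0)
      + (if (k : ℕ) = (j : ℕ) + 1 then (m : ℝ) - ((j : ℕ) : ℝ) else 0) := by
    intro k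
    rw [paperC_apply]
    split_ifs <;> first | omega | (push_cast [*]; ring) | (simp_all; ring) | simp_all
  simp only [hrw, Finset.sum_add_distrib]
  rw [Fin.sum_univ_eq_sum_range (fun k => if k = (j:ℕ) then 3 * ((j : ℕ) : ℝ) - ((m : ℝ) - 4) else 0),
      Fin.sum_univ_eq_sum_range (fun k => if (j:ℕ) = k + 1 then 2 * ((j : ℕ) : ℝ) else 0),
      Fin.sum_univ_eq_sum_range (fun k => if k = (j:ℕ) + 1 then (m : ℝ) - ((j : ℕ) : ℝ) else 0)]
  have hj : (j : ℕ) ≤ m := Nat.lt_succ_iff.mp j.isLt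
  have h1 : ∑ k ∈ Finset.range (m+1), (if k = (j:ℕ) then 3 * ((j : ℕ) : ℝ) - ((m : ℝ) - 4) else 0)
      = 3 * ((j : ℕ) : ℝ) - ((m : ℝ) - 4) := by
    rw [Finset.sum_ite_eq' (Finset.range (m+1)) (j:ℕ)]
    simp [Nat.lt_succ_iff, hj]
  have h2 : ∑ k ∈ Finset.range (m+1), (if (j:ℕ) = k + 1 then 2 * ((j : ℕ) : ℝ) else 0)
      = 2 * ((j : ℕ) : ℝ) := by
    rcases Nat.eq_zero_or_pos (j : ℕ) with hj0 | hj0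
    · simp [hj0]
    · obtain ⟨jj, hjj⟩ := Nat.exists_eq_add_of_lt hj0
      simp only [hjj, zero_add] at *
      have : ∀ k : ℕ, (jj + 1 = k + 1) = (k = jj) := by intro k; simp [eq_comm]
      simp only [this]
      rw [Finset.sum_ite_eq' (Finset.range (m+1)) jj]
      simp [Nat.lt_succ_iff]
      omega
  have h3 : ∑ k ∈ Finset.range (m+1), (if k = (j:ℕ) + 1 then (m : ℝ) - ((j : ℕ) : ℝ) else 0)
      = (m : ℝ) - ((j : ℕ) : ℝ) := by
    rw [Finset.sum_ite_eq' (Finset.range (m+1)) ((j:ℕ)+1)]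
    rcases Nat.lt_or_ge (j : ℕ) m with h | h
    · simp [Nat.lt_succ_iff, h]
    · have hjm : (j : ℕ) = m := le_antisymm hj h
      simp [Nat.lt_succ_iff, hjm]
  rw [h1, h2, h3]; ring

lemma BeqEC (m : ℕ) : paperB m = paperE m * paperC m := by
  ext i j
  rw [Matrix.mul_apply]
  by_cases h0 : (i : ℕ) = 0
  · simp only [paperE, Matrix.of_apply, h0, if_pos trivial, if_true]
    rw [← Finset.mul_sum, colsum]
    simp [paperB, h0]
    simp [(by simpa using h0 : i = 0)]
    ring
  · have : ∀ k, paperE m i k * paperC m k j = if i = k then paperC m k j else 0 := by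
      intro k
      simp [paperE, h0, (by simpa using h0 : ¬ i = 0)]
    simp only [this, Finset.sum_ite_eq, Finset.mem_univ, if_true]
    rw [paperC_apply]
    simp only [paperB, Matrix.of_apply, if_neg h0]
    split_ifs <;> first | omega | (push_cast [*]; ring) | (simp_all; ring) | simp_all

lemma detE (m : ℕ) : (paperE m).det = 1/4 := by
  rw [Matrix.det_of_upperTriangular]
  · rw [Finset.prod_eq_single (0 : Fin (m+1))]
    · simp [paperE]
    · intro b _ hb
      have : ¬ (b : ℕ) = 0 := fun hh => hb (Fin.ext hh)
      simp [paperE, this, hb]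
    · simp
  · intro i j hij
    have hlt : (j : ℕ) < (i : ℕ) := hij
    have h1 : ¬ (i : ℕ) = 0 := by omega
    have h2 : ¬ i = j := by intro h; subst h; exact absurd hlt (lt_irrefl _)
    simp [paperE, h1, h2, (by simpa using h1 : ¬ i = 0)]

theorem det_paperB_eq (m : ℕ) (hm : 1 ≤ m) :
    (paperB m).det = (1 / 4) * (paperC m).det := by
  rw [BeqEC, Matrix.det_mul, detE]
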